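/- arXiv:1409.0483 — 2 statements merged into one kernel-verified Lean document; each statement's English description precedes it below -/
import Mathlib

section
/- Let n, α, q be positive integers with q even and n ≥ α + q + 3. Then the number of integers m with F_n ≤ m < F_{n+1} whose Zeckendorf digits at positions α+1, …, α+q contain no two consecutive zeros (i.e., there is no k with α+2 ≤ k ≤ α+q and a_{k−1}(m) = a_k(m) = 0) equals F_{n−α−q−1} · F_α + F_{n−α−q−2} · F_{α+1}. Specifically, exactly F_{n−α−q−1} · F_α such m have (a_{α+1}(m), …, a_{α+q}(m)) = (1,0,1,0,…,1,0), and exactly F_{n−α−q−2} · F_{α+1} such m have (a_{α+1}(m), …, a_{α+q}(m)) = (0,1,0,1,…,0,1). -/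
open Filter MeasureTheory

/-- Fibonacci numbers normalized so that `F 1 = 1`, `F 2 = 2`. -/
def F (n : ℕ) : ℕ := Nat.fib (n + 1)

lemma F_pos (n : ℕ) : 0 < F n := Nat.fib_pos.2 (by omega)

lemma F_add_two (n : ℕ) : F (n + 2) = F (n + 1) + F n := by
  simp [F, Nat.fib_add_two]; omega

lemma F_mono : Monotone F := fun a b h => Nat.fib_mono (by omega)

lemma le_F (n : ℕ) : n ≤ F n := by
  induction n with
  | zero => simp [F]
  | succ k ih =>
    match k, ih with
    | 0, _ => simp [F]
    | (k+1), ih =>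
      have h1 := F_pos k
      have h2 : F (k + 1 + 1) = F (k + 1) + F k := F_add_two k
      omega

/-- Value of a digit string up to position `N`. -/
def zval (f : ℕ → ℕ) (N : ℕ) : ℕ := ∑ j ∈ Finset.Icc 1 N, f j * F j

lemma zval_succ (f : ℕ → ℕ) (N : ℕ) :
    zval f (N + 1) = zval f N + f (N + 1) * F (N + 1) :=
  Finset.sum_Icc_succ_top (by omega) _

lemma zval_lt (f : ℕ → ℕ) (h1 : ∀ j, f j ≤ 1)
    (h2 : ∀ j, ¬(f j = 1 ∧ f (j + 1) = 1)) : ∀ N, zval f N < F (N + 1) := by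
  intro N
  induction N using Nat.strong_induction_on with
  | _ N ih =>
    match N with
    | 0 =>
      have h0 : zval f 0 = 0 := by simp [zval]
      have h1' : F (0 + 1) = F 1 := rfl
      have := F_pos 1
      omega
    | 1 =>
      have h := h1 1
      have hv : zval f 1 = f 1 * F 1 := by simp [zval]
      have hF1 : F 1 = 1 := by simp [F]
      have hF2 : F (1 + 1) = 2 := by simp [F]; rfl
      nlinarith
    | (N+2) =>
      have hsplit : zval f (N + 2) = zval f (N + 1) + f (N + 2) * F (N + 2) :=
        zval_succ f (N + 1)
      have hF : F (N + 2 + 1) = F (N + 2) + F (N + 1) := F_add_two (N + 1)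
      rcases Nat.le_one_iff_eq_zero_or_eq_one.mp (h1 (N + 2)) with h | h
      · have ihh := ih (N + 1) (by omega)
        have hm := F_mono (show N + 1 + 1 ≤ N + 2 + 1 by omega)
        rw [h] at hsplit
        omega
      · have hz : f (N + 1) = 0 := by
          have hc := h2 (N + 1)
          have := h1 (N + 1)
          have hb : f (N + 1 + 1) = f (N + 2) := rfl
          omega
        have hsplit2 : zval f (N + 1) = zval f N + f (N + 1) * F (N + 1) := zval_succ f N
        rw [hz] at hsplit2
        rw [h] at hsplit
        have ihh := ih N (by omega)
        omega

lemma zval_inj : ∀ N (f g : ℕ → ℕ), (∀ j, f j ≤ 1) → (∀ j, ¬(f j = 1 ∧ f (j + 1) = 1)) →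
    (∀ j, g j ≤ 1) → (∀ j, ¬(g j = 1 ∧ g (j + 1) = 1)) →
    (∀ j, N < j → f j = 0) → (∀ j, N < j → g j = 0) →
    zval f N = zval g N → ∀ j, 1 ≤ j → f j = g j := by
  intro N
  induction N using Nat.strong_induction_on with
  | _ N ih =>
    match N with
    | 0 =>
      intro f g _ _ _ _ hf0 hg0 _ j hj
      rw [hf0 j (by omega), hg0 j (by omega)]
    | (N+1) =>
      intro f g hf1 hfc hg1 hgc hf0 hg0 hv
      have key : ∀ (f' g' : ℕ → ℕ), (∀ j, f' j ≤ 1) → (∀ j, ¬(f' j = 1 ∧ f' (j + 1) = 1)) →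
          zval f' (N + 1) = zval g' (N + 1) → f' (N + 1) = 0 → g' (N + 1) = 1 → False := by
        intro f' g' h1' h2' hv' hft hgt
        have e1 : zval f' (N + 1) = zval f' N + f' (N + 1) * F (N + 1) := zval_succ f' N
        have e2 : zval g' (N + 1) = zval g' N + g' (N + 1) * F (N + 1) := zval_succ g' N
        have lt := zval_lt f' h1' h2' N
        rw [hft] at e1; rw [hgt] at e2
        omega
      have htop : f (N + 1) = g (N + 1) := by
        rcases Nat.le_one_iff_eq_zero_or_eq_one.mp (hf1 (N + 1)) with h | h <;>
          rcases Nat.le_one_iff_eq_zero_or_eq_one.mp (hg1 (N + 1)) with h' | h'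
        · rw [h, h']
        · exact (key f g hf1 hfc hv h h').elim
        · exact (key g f hg1 hgc hv.symm h' h).elim
        · rw [h, h']
      intro j hj
      by_cases hjN : j = N + 1
      · rw [hjN, htop]
      · set f' := Function.update f (N + 1) 0 with hf'def
        set g' := Function.update g (N + 1) 0 with hg'def
        have upf : ∀ k, k ≠ N + 1 → f' k = f k := fun k hk => Function.update_of_ne hk _ _
        have upg : ∀ k, k ≠ N + 1 → g' k = g k := fun k hk => Function.update_of_ne hk _ _
        have upfN : f' (N + 1) = 0 := Function.update_self _ _ _
        have upgN : g' (N + 1) = 0 := Function.update_self _ _ _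
        have h1f' : ∀ k, f' k ≤ 1 := by
          intro k; by_cases hk : k = N + 1
          · rw [hk, upfN]; omega
          · rw [upf k hk]; exact hf1 k
        have h1g' : ∀ k, g' k ≤ 1 := by
          intro k; by_cases hk : k = N + 1
          · rw [hk, upgN]; omega
          · rw [upg k hk]; exact hg1 k
        have hcf' : ∀ k, ¬(f' k = 1 ∧ f' (k + 1) = 1) := by
          intro k hk
          by_cases h1 : k = N + 1
          · rw [h1, upfN] at hk; omega
          · by_cases h2 : k + 1 = N + 1
            · rw [h2, upfN] at hk; omega
            · rw [upf k h1, upf (k + 1) h2] at hk; exact hfc k hk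
        have hcg' : ∀ k, ¬(g' k = 1 ∧ g' (k + 1) = 1) := by
          intro k hk
          by_cases h1 : k = N + 1
          · rw [h1, upgN] at hk; omega
          · by_cases h2 : k + 1 = N + 1
            · rw [h2, upgN] at hk; omega
            · rw [upg k h1, upg (k + 1) h2] at hk; exact hgc k hk
        have h0f' : ∀ k, N < k → f' k = 0 := by
          intro k hk
          by_cases h1 : k = N + 1
          · rw [h1, upfN]
          · rw [upf k h1]; exact hf0 k (by omega)
        have h0g' : ∀ k, N < k → g' k = 0 := by
          intro k hk
          by_cases h1 : k = N + 1
          · rw [h1, upgN]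
          · rw [upg k h1]; exact hg0 k (by omega)
        have hvN : zval f N = zval g N := by
          have e1 : zval f (N + 1) = zval f N + f (N + 1) * F (N + 1) := zval_succ f N
          have e2 : zval g (N + 1) = zval g N + g (N + 1) * F (N + 1) := zval_succ g N
          rw [htop] at e1
          omega
        have hv' : zval f' N = zval g' N := by
          have ef : zval f' N = zval f N := by
            apply Finset.sum_congr rfl
            intro k hk
            rw [upf k (by simp at hk; omega)]
          have eg : zval g' N = zval g N := by
            apply Finset.sum_congr rfl
            intro k hk
            rw [upg k (by simp at hk; omega)]
          rw [ef, eg, hvN]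
        have := ih N (by omega) f' g' h1f' hcf' h1g' hcg' h0f' h0g' hv' j hj
        rw [upf j hjN, upg j hjN] at this
        exact this

/-- `a` is the (unique) system of Zeckendorf digits: `a m j` is the `j`-th digit of `m`,
digits are `0` or `1`, indexed from `1`, no two consecutive digits are `1`,
digits vanish above `m`, and the digits decompose `m`. -/
def IsZeckendorf (a : ℕ → ℕ → ℕ) : Prop :=
  ∀ m : ℕ,
    a m 0 = 0 ∧
    (∀ j, a m j ≤ 1) ∧
    (∀ j, ¬(a m j = 1 ∧ a m (j + 1) = 1)) ∧
    (∀ j, m < j → a m j = 0) ∧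
    m = ∑ j ∈ Finset.Icc 1 m, a m j * F j

variable {a : ℕ → ℕ → ℕ}

lemma digit_le (ha : IsZeckendorf a) (m j : ℕ) (h : a m j = 1) : F j ≤ m := by
  obtain ⟨h0, h1, hc, hsupp, hsum⟩ := ha m
  have hjm : j ≤ m := by
    by_contra hh
    rw [hsupp j (by omega)] at h; omega
  have hj1 : 1 ≤ j := by
    rcases Nat.eq_zero_or_pos j with hj | hj
    · rw [hj] at h; omega
    · exact hj
  calc F j = a m j * F j := by rw [h]; ring
    _ ≤ ∑ i ∈ Finset.Icc 1 m, a m i * F i :=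
        Finset.single_le_sum (f := fun i => a m i * F i) (fun i _ => Nat.zero_le _) (Finset.mem_Icc.mpr ⟨hj1, hjm⟩)
    _ = m := hsum.symm

lemma digit_zero_of_lt (ha : IsZeckendorf a) (m n j : ℕ) (hm : m < F (n + 1)) (hj : n < j) :
    a m j = 0 := by
  obtain ⟨_, h1, _, _, _⟩ := ha m
  rcases Nat.le_one_iff_eq_zero_or_eq_one.mp (h1 j) with h | h
  · exact h
  · have := digit_le ha m j h
    have := F_mono (show n + 1 ≤ j by omega)
    omega

lemma zval_digits (ha : IsZeckendorf a) (m n : ℕ) (hm : m < F (n + 1)) : zval (a m) n = m := by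
  obtain ⟨_, _, _, hsupp, hsum⟩ := ha m
  have e1 : zval (a m) n = zval (a m) (max m n) := by
    apply Finset.sum_subset (Finset.Icc_subset_Icc_right (le_max_right m n))
    intro x hx hnx
    simp only [Finset.mem_Icc] at hx hnx
    rw [digit_zero_of_lt ha m n x hm (by omega)]; ring
  have e2 : zval (a m) m = zval (a m) (max m n) := by
    apply Finset.sum_subset (Finset.Icc_subset_Icc_right (le_max_left m n))
    intro x hx hnx
    simp only [Finset.mem_Icc] at hx hnx
    rw [hsupp x (by omega)]; ring
  rw [e1, ← e2]
  exact hsum.symm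

lemma top_digit (ha : IsZeckendorf a) (m n : ℕ) (hn : 1 ≤ n) (h1 : F n ≤ m)
    (h2 : m < F (n + 1)) : a m n = 1 := by
  obtain ⟨_, hle, hc, _, _⟩ := ha m
  rcases Nat.le_one_iff_eq_zero_or_eq_one.mp (hle n) with h | h
  · exfalso
    obtain ⟨k, rfl⟩ : ∃ k, n = k + 1 := ⟨n - 1, by omega⟩
    have hs := zval_succ (a m) k
    have hb := zval_lt (a m) hle hc k
    have hz := zval_digits ha m (k + 1) h2
    rw [h] at hs
    omega
  · exact h

lemma count_general (ha : IsZeckendorf a) (n L S : ℕ) (p : ℕ → ℕ)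
    (hLS : L + 2 ≤ S) (hn : S + 2 ≤ n)
    (hp1 : ∀ j, p j ≤ 1)
    (hpcons : ∀ j, ¬(p j = 1 ∧ p (j + 1) = 1))
    (hplow : ∀ j, j ≤ L + 1 → p j = 0)
    (hphigh : ∀ j, S ≤ j → p j = 0) :
    ∃ t : Finset ℕ,
      {m : ℕ | F n ≤ m ∧ m < F (n + 1) ∧ ∀ j, L + 1 ≤ j → j ≤ S → a m j = p j} = ↑t ∧
      t.card = F (n - S - 1) * F (L + 1) := by
  set N := n - S with hNdef
  have hNn : n = N + S := by omega
  have hN2 : 2 ≤ N := by omega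
  set dig : ℕ → ℕ → ℕ → ℕ :=
    fun v u j => if j ≤ L then a u j else if j ≤ S then p j else a v (j - S) with hdig
  have dle : ∀ v u j, dig v u j ≤ 1 := by
    intro v u j
    simp only [hdig]
    split_ifs with h1 h2
    · exact (ha u).2.1 j
    · exact hp1 j
    · exact (ha v).2.1 _
  have dcons : ∀ v u j, ¬(dig v u j = 1 ∧ dig v u (j + 1) = 1) := by
    intro v u j hcontra
    obtain ⟨e1, e2⟩ := hcontra
    simp only [hdig] at e1 e2
    by_cases h1 : j + 1 ≤ L
    · rw [if_pos (show j ≤ L by omega)] at e1; rw [if_pos h1] at e2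
      exact (ha u).2.2.1 j ⟨e1, e2⟩
    · by_cases h2 : j + 1 ≤ S
      · rw [if_neg h1, if_pos h2] at e2
        by_cases h3 : j ≤ L
        · rw [hplow (j + 1) (by omega)] at e2; omega
        · rw [if_neg h3, if_pos (by omega)] at e1
          exact hpcons j ⟨e1, e2⟩
      · rw [if_neg (show ¬(j + 1 ≤ L) by omega), if_neg h2] at e2
        by_cases h3 : j ≤ S
        · rw [if_neg (show ¬(j ≤ L) by omega), if_pos h3] at e1
          rw [hphigh j (by omega)] at e1; omega
        · rw [if_neg (show ¬(j ≤ L) by omega), if_neg h3] at e1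
          rw [show j + 1 - S = (j - S) + 1 by omega] at e2
          exact (ha v).2.2.1 (j - S) ⟨e1, e2⟩
  have dsupp : ∀ v u, v < F (N + 1) → ∀ j, n < j → dig v u j = 0 := by
    intro v u hv j hj
    simp only [hdig]
    rw [if_neg (show ¬(j ≤ L) by omega), if_neg (show ¬(j ≤ S) by omega)]
    exact digit_zero_of_lt ha v N (j - S) hv (by omega)
  have dign : ∀ v u, F N ≤ v → v < F (N + 1) → dig v u n = 1 := by
    intro v u hv1 hv2
    simp only [hdig]
    rw [if_neg (show ¬(n ≤ L) by omega), if_neg (show ¬(n ≤ S) by omega),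
      show n - S = N by omega]
    exact top_digit ha v N (by omega) hv1 hv2
  set build : ℕ × ℕ → ℕ := fun x => zval (dig x.1 x.2) n with hbuild
  set P : Finset (ℕ × ℕ) := (Finset.Ico (F N) (F (N + 1))) ×ˢ (Finset.range (F (L + 1)))
    with hP
  have memP : ∀ x : ℕ × ℕ, x ∈ P ↔ (F N ≤ x.1 ∧ x.1 < F (N + 1)) ∧ x.2 < F (L + 1) := by
    intro x
    simp [hP, Finset.mem_product, Finset.mem_Ico, Finset.mem_range]
  -- membership in the set
  have hmem : ∀ x : ℕ × ℕ, x ∈ P →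
      F n ≤ build x ∧ build x < F (n + 1) ∧
      (∀ j, 1 ≤ j → a (build x) j = dig x.1 x.2 j) := by
    intro x hx
    obtain ⟨⟨hv1, hv2⟩, hu⟩ := (memP x).mp hx
    obtain ⟨v, u⟩ := x
    have hlt : build (v, u) < F (n + 1) := zval_lt _ (dle v u) (dcons v u) n
    have hge : F n ≤ build (v, u) := by
      calc F n = dig v u n * F n := by rw [dign v u hv1 hv2]; ring
        _ ≤ ∑ j ∈ Finset.Icc 1 n, dig v u j * F j :=
            Finset.single_le_sum (f := fun j => dig v u j * F j)
              (fun i _ => Nat.zero_le _) (Finset.mem_Icc.mpr ⟨by omega, le_refl n⟩)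
        _ = build (v, u) := rfl
    refine ⟨hge, hlt, ?_⟩
    exact zval_inj n (a (build (v, u))) (dig v u)
      (ha _).2.1 (ha _).2.2.1 (dle v u) (dcons v u)
      (fun j hj => digit_zero_of_lt ha _ n j hlt hj)
      (fun j hj => dsupp v u hv2 j hj)
      (zval_digits ha _ n hlt)
  -- injectivity
  have hinj : Set.InjOn build ↑P := by
    intro x hx y hy hxy
    obtain ⟨⟨hxv1, hxv2⟩, hxu⟩ := (memP x).mp hx
    obtain ⟨⟨hyv1, hyv2⟩, hyu⟩ := (memP y).mp hy
    have hdx := (hmem x hx).2.2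
    have hdy := (hmem y hy).2.2
    rw [hxy] at hdx
    have hdig_eq : ∀ j, 1 ≤ j → dig x.1 x.2 j = dig y.1 y.2 j := by
      intro j hj
      rw [← hdx j hj, ← hdy j hj]
    have hu : ∀ z : ℕ × ℕ, z.2 < F (L + 1) →
        z.2 = ∑ j ∈ Finset.Icc 1 L, dig z.1 z.2 j * F j := by
      intro z hz
      conv_lhs => rw [← zval_digits ha z.2 L hz]
      apply Finset.sum_congr rfl
      intro k hk
      simp only [Finset.mem_Icc] at hk
      simp only [hdig]
      rw [if_pos (show k ≤ L by omega)]
    have hv : ∀ z : ℕ × ℕ, z.1 < F (N + 1) →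
        z.1 = ∑ j ∈ Finset.Icc 1 N, dig z.1 z.2 (j + S) * F j := by
      intro z hz
      conv_lhs => rw [← zval_digits ha z.1 N hz]
      apply Finset.sum_congr rfl
      intro k hk
      simp only [Finset.mem_Icc] at hk
      simp only [hdig]
      rw [if_neg (show ¬(k + S ≤ L) by omega), if_neg (show ¬(k + S ≤ S) by omega),
        show k + S - S = k by omega]
    have e2 : x.2 = y.2 := by
      rw [hu x hxu, hu y hyu]
      apply Finset.sum_congr rfl
      intro k hk
      simp only [Finset.mem_Icc] at hk
      rw [hdig_eq k (by omega)]
    have e1 : x.1 = y.1 := by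
      rw [hv x hxv2, hv y hyv2]
      apply Finset.sum_congr rfl
      intro k hk
      simp only [Finset.mem_Icc] at hk
      rw [hdig_eq (k + S) (by omega)]
    exact Prod.ext e1 e2
  -- surjectivity
  have hsurj : ∀ m, F n ≤ m → m < F (n + 1) → (∀ j, L + 1 ≤ j → j ≤ S → a m j = p j) →
      ∃ x ∈ P, build x = m := by
    intro m hm1 hm2 hpat
    set u := zval (a m) L with hudef
    set g : ℕ → ℕ := fun k => a m (k + S) with hgdef
    set v := zval g N with hvdef
    have hu_lt : u < F (L + 1) := zval_lt (a m) (ha m).2.1 (ha m).2.2.1 L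
    have gle : ∀ k, g k ≤ 1 := fun k => (ha m).2.1 _
    have gcons : ∀ k, ¬(g k = 1 ∧ g (k + 1) = 1) := by
      intro k hk
      simp only [hgdef] at hk
      rw [show k + 1 + S = (k + S) + 1 by omega] at hk
      exact (ha m).2.2.1 (k + S) hk
    have hv_lt : v < F (N + 1) := zval_lt g gle gcons N
    have hgN : g N = 1 := by
      simp only [hgdef]
      rw [show N + S = n by omega]
      exact top_digit ha m n (by omega) hm1 hm2
    have hv_ge : F N ≤ v := by
      calc F N = g N * F N := by rw [hgN]; ring
        _ ≤ ∑ j ∈ Finset.Icc 1 N, g j * F j :=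
            Finset.single_le_sum (f := fun j => g j * F j)
              (fun i _ => Nat.zero_le _) (Finset.mem_Icc.mpr ⟨by omega, le_refl N⟩)
        _ = v := rfl
    refine ⟨(v, u), (memP (v, u)).mpr ⟨⟨hv_ge, hv_lt⟩, hu_lt⟩, ?_⟩
    have hdigeq : ∀ j, 1 ≤ j → dig v u j = a m j := by
      set trunc : ℕ → ℕ := fun k => if k ≤ L then a m k else 0 with htr
      have t1 : ∀ k, trunc k ≤ 1 := by
        intro k
        simp only [htr]
        split_ifs
        · exact (ha m).2.1 k
        · omega
      have t2 : ∀ k, ¬(trunc k = 1 ∧ trunc (k + 1) = 1) := by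
        intro k hk
        simp only [htr] at hk
        split_ifs at hk <;> first | exact (ha m).2.2.1 k hk | exact hk.2.elim | exact hk.1.elim
      have t3 : ∀ k, L < k → trunc k = 0 := by
        intro k hk
        simp only [htr]
        rw [if_neg (by omega)]
      have t4 : zval (a u) L = zval trunc L := by
        rw [zval_digits ha u L hu_lt]
        show zval (a m) L = zval trunc L
        apply Finset.sum_congr rfl
        intro k hk
        simp only [Finset.mem_Icc] at hk
        simp only [htr]
        rw [if_pos (show k ≤ L by omega)]
      have low : ∀ k, 1 ≤ k → a u k = trunc k :=
        zval_inj L (a u) trunc (ha u).2.1 (ha u).2.2.1 t1 t2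
          (fun k hk => digit_zero_of_lt ha u L k hu_lt hk) t3 t4
      have high : ∀ k, 1 ≤ k → a v k = g k :=
        zval_inj N (a v) g (ha v).2.1 (ha v).2.2.1 gle gcons
          (fun k hk => digit_zero_of_lt ha v N k hv_lt hk)
          (fun k hk => digit_zero_of_lt ha m n (k + S) hm2 (by omega))
          (zval_digits ha v N hv_lt)
      intro j hj
      simp only [hdig]
      by_cases h1 : j ≤ L
      · rw [if_pos h1, low j hj]
        simp only [htr]
        rw [if_pos h1]
      · by_cases h2 : j ≤ S
        · rw [if_neg h1, if_pos h2]
          exact (hpat j (by omega) h2).symm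
        · rw [if_neg h1, if_neg h2, high (j - S) (by omega)]
          simp only [hgdef]
          rw [show j - S + S = j by omega]
    show zval (dig v u) n = m
    rw [← zval_digits ha m n hm2]
    apply Finset.sum_congr rfl
    intro k hk
    simp only [Finset.mem_Icc] at hk
    rw [hdigeq k (by omega)]
  refine ⟨P.image build, ?_, ?_⟩
  · ext m
    simp only [Set.mem_setOf_eq, Finset.coe_image, Set.mem_image, Finset.mem_coe]
    constructor
    · rintro ⟨h1, h2, h3⟩
      obtain ⟨x, hx, hbx⟩ := hsurj m h1 h2 h3
      exact ⟨x, hx, hbx⟩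
    · rintro ⟨x, hx, rfl⟩
      obtain ⟨h1, h2, h3⟩ := hmem x hx
      refine ⟨h1, h2, ?_⟩
      intro j hj1 hj2
      rw [h3 j (by omega)]
      simp only [hdig]
      rw [if_neg (show ¬(j ≤ L) by omega), if_pos hj2]
  · rw [Finset.card_image_of_injOn hinj]
    simp only [hP, Finset.card_product, Nat.card_Ico, Finset.card_range]
    have hF : F (N + 1) = F N + F (N - 1) := by
      rw [show N + 1 = (N - 1) + 2 by omega, F_add_two, show N - 1 + 1 = N by omega]
    rw [hF, Nat.add_sub_cancel_left]

def podd (α q j : ℕ) : ℕ := if α + 1 ≤ j ∧ j ≤ α + q ∧ (j - α) % 2 = 1 then 1 else 0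
def peven (α q j : ℕ) : ℕ := if α + 1 ≤ j ∧ j ≤ α + q ∧ (j - α) % 2 = 0 then 1 else 0

lemma podd_eq_one (α q j : ℕ) :
    podd α q j = 1 ↔ (α + 1 ≤ j ∧ j ≤ α + q ∧ (j - α) % 2 = 1) := by
  unfold podd; split_ifs with h <;> [exact iff_of_true (by simp) h; exact iff_of_false (by simp) h]

lemma peven_eq_one (α q j : ℕ) :
    peven α q j = 1 ↔ (α + 1 ≤ j ∧ j ≤ α + q ∧ (j - α) % 2 = 0) := by
  unfold peven; split_ifs with h <;> [exact iff_of_true (by simp) h; exact iff_of_false (by simp) h]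

/-- Number of summands in the Zeckendorf decomposition of `m`. -/
def s (a : ℕ → ℕ → ℕ) (m : ℕ) : ℕ := ∑ j ∈ Finset.Icc 1 m, a m j

/-- counting the `m ∈ [F n, F (n+1))` whose digits in positions
`α+1, …, α+q` have no two consecutive zeros. -/
theorem count_bad_middle_blocks
    (a : ℕ → ℕ → ℕ) (ha : IsZeckendorf a)
    (n α q : ℕ) (hn : 0 < n) (hα : 0 < α) (hq : 0 < q) (hqe : Even q)
    (hbound : α + q + 3 ≤ n) :
    Nat.card {m : ℕ // F n ≤ m ∧ m < F (n + 1) ∧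
        ¬∃ k, α + 2 ≤ k ∧ k ≤ α + q ∧ a m (k - 1) = 0 ∧ a m k = 0} =
      F (n - α - q - 1) * F α + F (n - α - q - 2) * F (α + 1) ∧
    Nat.card {m : ℕ // F n ≤ m ∧ m < F (n + 1) ∧
        ∀ j, α + 1 ≤ j → j ≤ α + q → (a m j = 1 ↔ Odd (j - α))} =
      F (n - α - q - 1) * F α ∧
    Nat.card {m : ℕ // F n ≤ m ∧ m < F (n + 1) ∧
        ∀ j, α + 1 ≤ j → j ≤ α + q → (a m j = 1 ↔ Even (j - α))} =
      F (n - α - q - 2) * F (α + 1) := by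
  have hq2 : q % 2 = 0 := Nat.even_iff.mp hqe
  obtain ⟨t2, ht2, ht2c⟩ := count_general ha n (α - 1) (α + q) (podd α q)
      (by omega) (by omega)
      (fun j => by unfold podd; split_ifs <;> omega)
      (fun j hcon => by rw [podd_eq_one, podd_eq_one] at hcon; omega)
      (fun j hj => by unfold podd; rw [if_neg (by omega)])
      (fun j hj => by unfold podd; rw [if_neg (by omega)])
  obtain ⟨t3, ht3, ht3c⟩ := count_general ha n α (α + q + 1) (peven α q)
      (by omega) (by omega)
      (fun j => by unfold peven; split_ifs <;> omega)
      (fun j hcon => by rw [peven_eq_one, peven_eq_one] at hcon; omega)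
      (fun j hj => by unfold peven; rw [if_neg (by omega)])
      (fun j hj => by unfold peven; rw [if_neg (by omega)])
  rw [show n - (α + q) - 1 = n - α - q - 1 by omega, show α - 1 + 1 = α by omega] at ht2c
  rw [show n - (α + q + 1) - 1 = n - α - q - 2 by omega] at ht3c
  have hiff2 : ∀ m, (∀ j, α + 1 ≤ j → j ≤ α + q → (a m j = 1 ↔ Odd (j - α))) ↔
      (∀ j, α - 1 + 1 ≤ j → j ≤ α + q → a m j = podd α q j) := by
    intro m
    have hle := (ha m).2.1
    have hcons := (ha m).2.2.1
    constructor
    · intro h j hj1 hj2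
      unfold podd
      by_cases hja : α + 1 ≤ j
      · have hx := h j hja hj2
        rw [Nat.odd_iff] at hx
        have hl := hle j
        split_ifs with hc
        · exact hx.mpr hc.2.2
        · have hnc : ¬((j - α) % 2 = 1) := fun hh => hc ⟨hja, hj2, hh⟩
          omega
      · rw [if_neg (by omega)]
        have h1 := h (α + 1) (le_refl _) (by omega)
        rw [Nat.odd_iff] at h1
        have hb := hcons α
        have hl1 := hle α
        have hl2 := hle (α + 1)
        have hj : j = α := by omega
        subst hj
        omega
    · intro h j hj1 hj2
      have hx := h j (by omega) hj2
      unfold podd at hx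
      rw [Nat.odd_iff]
      split_ifs at hx with hc
      · have := hc.2.2
        omega
      · have hnc : ¬((j - α) % 2 = 1) := fun hh => hc ⟨hj1, hj2, hh⟩
        omega
  have hiff3 : ∀ m, (∀ j, α + 1 ≤ j → j ≤ α + q → (a m j = 1 ↔ Even (j - α))) ↔
      (∀ j, α + 1 ≤ j → j ≤ α + q + 1 → a m j = peven α q j) := by
    intro m
    have hle := (ha m).2.1
    have hcons := (ha m).2.2.1
    constructor
    · intro h j hj1 hj2
      unfold peven
      by_cases hja : j ≤ α + q
      · have hx := h j hj1 hja
        rw [Nat.even_iff] at hx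
        have hl := hle j
        split_ifs with hc
        · exact hx.mpr hc.2.2
        · have hnc : ¬((j - α) % 2 = 0) := fun hh => hc ⟨hj1, hja, hh⟩
          omega
      · rw [if_neg (by omega)]
        have h1 := h (α + q) (by omega) (le_refl _)
        rw [Nat.even_iff] at h1
        have hb := hcons (α + q)
        have hl1 := hle (α + q)
        have hl2 := hle (α + q + 1)
        have hj : j = α + q + 1 := by omega
        subst hj
        omega
    · intro h j hj1 hj2
      have hx := h j hj1 (by omega)
      unfold peven at hx
      rw [Nat.even_iff]
      split_ifs at hx with hc
      · have := hc.2.2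
        omega
      · have hnc : ¬((j - α) % 2 = 0) := fun hh => hc ⟨hj1, hj2, hh⟩
        omega
  have hs2 : {m : ℕ | F n ≤ m ∧ m < F (n + 1) ∧
      ∀ j, α + 1 ≤ j → j ≤ α + q → (a m j = 1 ↔ Odd (j - α))} = ↑t2 := by
    rw [← ht2]
    ext m
    simp only [Set.mem_setOf_eq]
    exact and_congr_right fun _ => and_congr_right fun _ => hiff2 m
  have hs3 : {m : ℕ | F n ≤ m ∧ m < F (n + 1) ∧
      ∀ j, α + 1 ≤ j → j ≤ α + q → (a m j = 1 ↔ Even (j - α))} = ↑t3 := by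
    rw [← ht3]
    ext m
    simp only [Set.mem_setOf_eq]
    exact and_congr_right fun _ => and_congr_right fun _ => hiff3 m
  -- alternation for part 1
  have halt : ∀ m, (¬∃ k, α + 2 ≤ k ∧ k ≤ α + q ∧ a m (k - 1) = 0 ∧ a m k = 0) →
      ∀ d, d < q → a m (α + 1 + d) = if d % 2 = 0 then a m (α + 1) else 1 - a m (α + 1) := by
    intro m hno d
    induction d with
    | zero => intro _; simp
    | succ d ih =>
      intro hd
      have hih := ih (by omega)
      have hle1 := (ha m).2.1 (α + 1 + d)
      have hle2 := (ha m).2.1 (α + 1 + (d + 1))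
      have hleb := (ha m).2.1 (α + 1)
      have hstep : a m (α + 1 + (d + 1)) = 1 - a m (α + 1 + d) := by
        rcases Nat.le_one_iff_eq_zero_or_eq_one.mp hle1 with h0 | h1
        · have hne : a m (α + 1 + (d + 1)) ≠ 0 := by
            intro hz
            exact hno ⟨α + d + 2, by omega, by omega,
              by rw [show α + d + 2 - 1 = α + 1 + d by omega]; exact h0,
              by rw [show α + d + 2 = α + 1 + (d + 1) by omega]; exact hz⟩
          omega
        · have hcons := (ha m).2.2.1 (α + 1 + d)
          have hbr : a m (α + 1 + d + 1) = a m (α + 1 + (d + 1)) := congrArg (a m) (by omega)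
          omega
      rw [hstep]
      split_ifs at hih ⊢ <;> omega
  have hs1 : {m : ℕ | F n ≤ m ∧ m < F (n + 1) ∧
      ¬∃ k, α + 2 ≤ k ∧ k ≤ α + q ∧ a m (k - 1) = 0 ∧ a m k = 0} = ↑(t2 ∪ t3) := by
    ext m
    simp only [Set.mem_setOf_eq, Finset.coe_union, Set.mem_union]
    constructor
    · rintro ⟨h1, h2, h3⟩
      have hle := (ha m).2.1
      rcases Nat.le_one_iff_eq_zero_or_eq_one.mp (hle (α + 1)) with hb | hb
      · right
        rw [← hs3]
        refine ⟨h1, h2, fun j hj1 hj2 => ?_⟩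
        have hd := halt m h3 (j - α - 1) (by omega)
        have hbridge : a m (α + 1 + (j - α - 1)) = a m j := congrArg (a m) (by omega)
        rw [hbridge] at hd
        rw [Nat.even_iff]
        split_ifs at hd <;> omega
      · left
        rw [← hs2]
        refine ⟨h1, h2, fun j hj1 hj2 => ?_⟩
        have hd := halt m h3 (j - α - 1) (by omega)
        have hbridge : a m (α + 1 + (j - α - 1)) = a m j := congrArg (a m) (by omega)
        rw [hbridge] at hd
        rw [Nat.odd_iff]
        split_ifs at hd <;> omega
    · rintro (hm | hm)
      · have hmem : m ∈ {m : ℕ | F n ≤ m ∧ m < F (n + 1) ∧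
            ∀ j, α + 1 ≤ j → j ≤ α + q → (a m j = 1 ↔ Odd (j - α))} := by
          rw [hs2]; exact hm
        obtain ⟨h1, h2, hiff⟩ := hmem
        refine ⟨h1, h2, ?_⟩
        rintro ⟨k, hk1, hk2, hz1, hz2⟩
        have e1 := hiff (k - 1) (by omega) (by omega)
        have e2 := hiff k (by omega) hk2
        rw [Nat.odd_iff] at e1 e2
        omega
      · have hmem : m ∈ {m : ℕ | F n ≤ m ∧ m < F (n + 1) ∧
            ∀ j, α + 1 ≤ j → j ≤ α + q → (a m j = 1 ↔ Even (j - α))} := by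
          rw [hs3]; exact hm
        obtain ⟨h1, h2, hiff⟩ := hmem
        refine ⟨h1, h2, ?_⟩
        rintro ⟨k, hk1, hk2, hz1, hz2⟩
        have e1 := hiff (k - 1) (by omega) (by omega)
        have e2 := hiff k (by omega) hk2
        rw [Nat.even_iff] at e1 e2
        omega
  have hdisj : Disjoint t2 t3 := by
    rw [Finset.disjoint_left]
    intro m hm2 hm3
    have h2' : m ∈ {m : ℕ | F n ≤ m ∧ m < F (n + 1) ∧
        ∀ j, α + 1 ≤ j → j ≤ α + q → (a m j = 1 ↔ Odd (j - α))} := by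
      rw [hs2]; exact hm2
    have h3' : m ∈ {m : ℕ | F n ≤ m ∧ m < F (n + 1) ∧
        ∀ j, α + 1 ≤ j → j ≤ α + q → (a m j = 1 ↔ Even (j - α))} := by
      rw [hs3]; exact hm3
    have e2 := h2'.2.2 (α + 1) (le_refl _) (by omega)
    have e3 := h3'.2.2 (α + 1) (le_refl _) (by omega)
    rw [Nat.odd_iff] at e2
    rw [Nat.even_iff] at e3
    have := (ha m).2.1 (α + 1)
    omega
  refine ⟨?_, ?_, ?_⟩
  · have e : Nat.card {m : ℕ // F n ≤ m ∧ m < F (n + 1) ∧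
        ¬∃ k, α + 2 ≤ k ∧ k ≤ α + q ∧ a m (k - 1) = 0 ∧ a m k = 0} =
        ({m : ℕ | F n ≤ m ∧ m < F (n + 1) ∧
        ¬∃ k, α + 2 ≤ k ∧ k ≤ α + q ∧ a m (k - 1) = 0 ∧ a m k = 0} : Set ℕ).ncard :=
      Nat.card_coe_set_eq _
    rw [e, hs1, Set.ncard_coe_finset, Finset.card_union_of_disjoint hdisj, ht2c, ht3c]
  · have e : Nat.card {m : ℕ // F n ≤ m ∧ m < F (n + 1) ∧
        ∀ j, α + 1 ≤ j → j ≤ α + q → (a m j = 1 ↔ Odd (j - α))} =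
        ({m : ℕ | F n ≤ m ∧ m < F (n + 1) ∧
        ∀ j, α + 1 ≤ j → j ≤ α + q → (a m j = 1 ↔ Odd (j - α))} : Set ℕ).ncard :=
      Nat.card_coe_set_eq _
    rw [e, hs2, Set.ncard_coe_finset, ht2c]
  · have e : Nat.card {m : ℕ // F n ≤ m ∧ m < F (n + 1) ∧
        ∀ j, α + 1 ≤ j → j ≤ α + q → (a m j = 1 ↔ Even (j - α))} =
        ({m : ℕ | F n ≤ m ∧ m < F (n + 1) ∧
        ∀ j, α + 1 ≤ j → j ≤ α + q → (a m j = 1 ↔ Even (j - α))} : Set ℕ).ncard :=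
      Nat.card_coe_set_eq _
    rw [e, hs3, Set.ncard_coe_finset, ht3c]
end

section
/- Let n and k be positive integers with k ≤ n and n ≡ k (mod 2). Then every integer y satisfying F_n + F_{n−2} + F_{n−4} + ⋯ + F_k ≤ y < F_{n+1} has at least (n − k)/2 + 1 summands in its Zeckendorf decomposition, i.e., s(y) ≥ (n − k)/2 + 1. Consequently, for n ≥ 3, every integer m with F_{2n} + F_n + F_{n−2} + ⋯ + F_k ≤ m < F_{2n} + F_{n+1} satisfies s(m) ≥ (n − k)/2 + 2. -/
open Filter MeasureTheory

def S (N t : ℕ) : ℕ := ∑ i ∈ Finset.range t, F (N - 2 * i)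

lemma F_mono_s13 {m n : ℕ} (h : m ≤ n) : F m ≤ F n := Nat.fib_mono (by omega)

lemma F_one : F 1 = 1 := rfl
lemma F_two : F 2 = 2 := rfl

lemma S_succ (N t : ℕ) : S N (t + 1) = S N t + F (N - 2 * t) := Finset.sum_range_succ _ _

lemma S_mono_t {t t' : ℕ} (N : ℕ) (h : t ≤ t') : S N t ≤ S N t' :=
  Finset.sum_le_sum_of_subset (Finset.range_subset_range.mpr h)

lemma S_mono_N {N N' : ℕ} (h : N ≤ N') (t : ℕ) : S N t ≤ S N' t :=
  Finset.sum_le_sum fun i _ => F_mono_s13 (by omega)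

lemma S_add_two (N t : ℕ) : S (N + 2) (t + 1) = F (N + 2) + S N t := by
  unfold S
  rw [Finset.sum_range_succ']
  simp only [Nat.mul_zero, Nat.sub_zero]
  rw [Nat.add_comm]
  congr 1
  apply Finset.sum_congr rfl
  intro i _
  congr 1
  omega

lemma split_top (g : ℕ → ℕ) (N : ℕ) :
    ∑ j ∈ Finset.Icc 1 (N + 1), g j = (∑ j ∈ Finset.Icc 1 N, g j) + g (N + 1) :=
  Finset.sum_Icc_succ_top (by omega) _

lemma sum_lt_F (b : ℕ → ℕ) (hb1 : ∀ j, b j ≤ 1) (hb2 : ∀ j, ¬(b j = 1 ∧ b (j + 1) = 1)) :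
    ∀ N, ∑ j ∈ Finset.Icc 1 N, b j * F j < F (N + 1) := by
  intro N
  induction N using Nat.strong_induction_on with
  | _ N ih =>
    match N, ih with
    | 0, _ => simp [F]
    | 1, _ =>
      have h1 := hb1 1
      have h2 : ∑ j ∈ Finset.Icc 1 1, b j * F j = b 1 * F 1 := by simp
      rw [h2, F_one, F_two]; omega
    | (N+2), ih =>
      have e1 : ∑ j ∈ Finset.Icc 1 (N + 2), b j * F j
          = (∑ j ∈ Finset.Icc 1 (N + 1), b j * F j) + b (N + 2) * F (N + 2) :=
        split_top _ (N + 1)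
      have e2 : ∑ j ∈ Finset.Icc 1 (N + 1), b j * F j
          = (∑ j ∈ Finset.Icc 1 N, b j * F j) + b (N + 1) * F (N + 1) :=
        split_top _ N
      have hrec : F (N + 3) = F (N + 2) + F (N + 1) := F_add_two (N + 1)
      have goal3 : F ((N + 2) + 1) = F (N + 3) := rfl
      rw [goal3, e1]
      rcases Nat.le_one_iff_eq_zero_or_eq_one.mp (hb1 (N + 2)) with h | h
      · have hI := ih (N + 1) (by omega)
        rw [h]
        have : F (N + 1 + 1) = F (N + 2) := rfl
        omega
      · have h0 : b (N + 1) = 0 := by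
          have h1 := hb1 (N + 1)
          by_contra hni
          exact hb2 (N + 1) ⟨by omega, h⟩
        have hI := ih N (by omega)
        rw [e2, h0, h]
        omega

lemma sum_le_S (b : ℕ → ℕ) (hb1 : ∀ j, b j ≤ 1) (hb2 : ∀ j, ¬(b j = 1 ∧ b (j + 1) = 1)) :
    ∀ N t, (∑ j ∈ Finset.Icc 1 N, b j) ≤ t →
      ∑ j ∈ Finset.Icc 1 N, b j * F j ≤ S N t := by
  intro N
  induction N using Nat.strong_induction_on with
  | _ N ih =>
    match N, ih with
    | 0, _ => intro t _; simp
    | 1, _ =>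
      intro t ht
      have h1 : ∑ j ∈ Finset.Icc 1 1, b j * F j = b 1 * F 1 := by simp
      have h2 : ∑ j ∈ Finset.Icc 1 1, b j = b 1 := by simp
      rw [h1, F_one]
      rcases Nat.le_one_iff_eq_zero_or_eq_one.mp (hb1 1) with h | h
      · rw [h]; exact Nat.zero_le _
      · rw [h2, h] at ht
        have hm : S 1 1 ≤ S 1 t := S_mono_t 1 ht
        have h11 : S 1 1 = F 1 := by simp [S]
        rw [h, F_one] at *
        omega
    | (N+2), ih =>
      intro t ht
      have e1 : ∑ j ∈ Finset.Icc 1 (N + 2), b j * F j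
          = (∑ j ∈ Finset.Icc 1 (N + 1), b j * F j) + b (N + 2) * F (N + 2) :=
        split_top _ (N + 1)
      have e1' : ∑ j ∈ Finset.Icc 1 (N + 2), b j
          = (∑ j ∈ Finset.Icc 1 (N + 1), b j) + b (N + 2) :=
        split_top _ (N + 1)
      have e2 : ∑ j ∈ Finset.Icc 1 (N + 1), b j * F j
          = (∑ j ∈ Finset.Icc 1 N, b j * F j) + b (N + 1) * F (N + 1) :=
        split_top _ N
      have e2' : ∑ j ∈ Finset.Icc 1 (N + 1), b j
          = (∑ j ∈ Finset.Icc 1 N, b j) + b (N + 1) :=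
        split_top _ N
      rw [e1]
      rcases Nat.le_one_iff_eq_zero_or_eq_one.mp (hb1 (N + 2)) with h | h
      · rw [h]
        have hht : (∑ j ∈ Finset.Icc 1 (N + 1), b j) ≤ t := by omega
        have hI := ih (N + 1) (by omega) t hht
        have hm : S (N + 1) t ≤ S (N + 2) t := S_mono_N (by omega) t
        omega
      · have h0 : b (N + 1) = 0 := by
          have h1 := hb1 (N + 1)
          by_contra hni
          exact hb2 (N + 1) ⟨by omega, h⟩
        obtain ⟨t', rfl⟩ : ∃ t', t = t' + 1 := ⟨t - 1, by omega⟩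
        have hht : (∑ j ∈ Finset.Icc 1 N, b j) ≤ t' := by omega
        have hI := ih N (by omega) t' hht
        have hS := S_add_two N t'
        rw [e2, h0, h]
        omega

lemma sum_Icc_extend (g : ℕ → ℕ) {M M' : ℕ} (h : M ≤ M')
    (hz : ∀ j, M < j → j ≤ M' → g j = 0) :
    ∑ j ∈ Finset.Icc 1 M', g j = ∑ j ∈ Finset.Icc 1 M, g j := by
  rw [← Finset.sum_subset (Finset.Icc_subset_Icc_right h)]
  intro x hx hx'
  simp only [Finset.mem_Icc] at hx hx'
  exact hz x (by omega) hx.2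

lemma key (b : ℕ → ℕ) (hb1 : ∀ j, b j ≤ 1) (hb2 : ∀ j, ¬(b j = 1 ∧ b (j + 1) = 1))
    (n N : ℕ) (hnN : n ≤ N)
    (hlt : ∑ j ∈ Finset.Icc 1 N, b j * F j < F (n + 1)) :
    (∑ j ∈ Finset.Icc 1 N, b j * F j = ∑ j ∈ Finset.Icc 1 n, b j * F j) ∧
    (∑ j ∈ Finset.Icc 1 N, b j = ∑ j ∈ Finset.Icc 1 n, b j) ∧
    ∑ j ∈ Finset.Icc 1 N, b j * F j ≤ S n (∑ j ∈ Finset.Icc 1 N, b j) := by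
  have hz : ∀ j, n < j → j ≤ N → b j = 0 := by
    intro j hj hjN
    by_contra h
    have hb : b j = 1 := by have := hb1 j; omega
    have hterm : b j * F j ≤ ∑ j ∈ Finset.Icc 1 N, b j * F j :=
      Finset.single_le_sum (f := fun j => b j * F j) (fun i _ => Nat.zero_le _)
        (Finset.mem_Icc.mpr ⟨by omega, hjN⟩)
    have hF : F (n + 1) ≤ F j := F_mono_s13 (by omega)
    rw [hb, Nat.one_mul] at hterm
    omega
  have e1 : ∑ j ∈ Finset.Icc 1 N, b j * F j = ∑ j ∈ Finset.Icc 1 n, b j * F j :=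
    sum_Icc_extend _ hnN (fun j hj hjN => by rw [hz j hj hjN, Nat.zero_mul])
  have e2 : ∑ j ∈ Finset.Icc 1 N, b j = ∑ j ∈ Finset.Icc 1 n, b j :=
    sum_Icc_extend _ hnN hz
  refine ⟨e1, e2, ?_⟩
  rw [e1, e2]
  exact sum_le_S b hb1 hb2 n _ le_rfl

/-- integers in `[F n + F (n-2) + ⋯ + F k, F (n+1))` have at least
`(n-k)/2 + 1` Zeckendorf summands; consequently integers in
`[F (2n) + F n + F (n-2) + ⋯ + F k, F (2n) + F (n+1))` have at least `(n-k)/2 + 2`. -/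
theorem many_summands_above_tail_sum
    (a : ℕ → ℕ → ℕ) (ha : IsZeckendorf a)
    (n k : ℕ) (hk : 0 < k) (hkn : k ≤ n) (hpar : n % 2 = k % 2) :
    (∀ y : ℕ, (∑ i ∈ Finset.range ((n - k) / 2 + 1), F (k + 2 * i)) ≤ y →
      y < F (n + 1) → (n - k) / 2 + 1 ≤ s a y) ∧
    (3 ≤ n → ∀ m : ℕ,
      F (2 * n) + (∑ i ∈ Finset.range ((n - k) / 2 + 1), F (k + 2 * i)) ≤ m →
      m < F (2 * n) + F (n + 1) → (n - k) / 2 + 2 ≤ s a m) := by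
  set t := (n - k) / 2 with ht
  have hnk : n = k + 2 * t := by omega
  have hT : (∑ i ∈ Finset.range (t + 1), F (k + 2 * i)) = S n (t + 1) := by
    unfold S
    rw [← Finset.sum_range_reflect]
    apply Finset.sum_congr rfl
    intro i hi
    simp only [Finset.mem_range] at hi
    congr 1
    omega
  have hTt : S n (t + 1) = S n t + F k := by
    rw [S_succ]
    congr 2
    omega
  have hFk : 0 < F k := F_pos k
  constructor
  · -- Part 1
    intro y hy1 hy2
    obtain ⟨-, hb1, hb2, hvan, hsum⟩ := ha y
    set N := max y n with hN
    have hval : ∑ j ∈ Finset.Icc 1 N, a y j * F j = y := by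
      rw [sum_Icc_extend _ (le_max_left y n)
        (fun j hj _ => by rw [hvan j hj, Nat.zero_mul]), ← hsum]
    have hcnt : ∑ j ∈ Finset.Icc 1 N, a y j = s a y := by
      rw [sum_Icc_extend _ (le_max_left y n) (fun j hj _ => hvan j hj)]; rfl
    obtain ⟨-, -, hkey⟩ := key (a y) hb1 hb2 n N (le_max_right y n) (by rw [hval]; exact hy2)
    rw [hval, hcnt] at hkey
    by_contra hcon
    push_neg at hcon
    have hle : s a y ≤ t := by omega
    have h1 : S n (s a y) ≤ S n t := S_mono_t n hle
    rw [hT, hTt] at hy1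
    omega
  · -- Part 2
    intro h3 m hm1 hm2
    obtain ⟨M, hM⟩ : ∃ M, 2 * n = M + 2 := ⟨2 * n - 2, by omega⟩
    rw [hM] at hm1 hm2
    obtain ⟨-, hb1, hb2, hvan, hsum⟩ := ha m
    have hF1 : F (n + 1) ≤ F (M + 1) := F_mono_s13 (by omega)
    have hrec : F (M + 3) = F (M + 2) + F (M + 1) := F_add_two (M + 1)
    have hmlt : m < F (M + 3) := by omega
    set N := max m (M + 2) with hN
    have hval : ∑ j ∈ Finset.Icc 1 N, a m j * F j = m := by
      rw [sum_Icc_extend _ (le_max_left _ _)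
        (fun j hj _ => by rw [hvan j hj, Nat.zero_mul]), ← hsum]
    have hcnt : ∑ j ∈ Finset.Icc 1 N, a m j = s a m := by
      rw [sum_Icc_extend _ (le_max_left _ _) (fun j hj _ => hvan j hj)]; rfl
    obtain ⟨hvN, hcN, -⟩ := key (a m) hb1 hb2 (M + 2) N (le_max_right _ _)
      (by rw [hval]; exact lt_of_lt_of_le hmlt (le_of_eq rfl))
    rw [hval] at hvN
    rw [hcnt] at hcN
    -- now m = ∑ Icc 1 (M+2), s a m = ∑ Icc 1 (M+2)
    have e1 : ∑ j ∈ Finset.Icc 1 (M + 2), a m j * F j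
        = (∑ j ∈ Finset.Icc 1 (M + 1), a m j * F j) + a m (M + 2) * F (M + 2) :=
      split_top _ (M + 1)
    have e1' : ∑ j ∈ Finset.Icc 1 (M + 2), a m j
        = (∑ j ∈ Finset.Icc 1 (M + 1), a m j) + a m (M + 2) :=
      split_top _ (M + 1)
    have e2 : ∑ j ∈ Finset.Icc 1 (M + 1), a m j * F j
        = (∑ j ∈ Finset.Icc 1 M, a m j * F j) + a m (M + 1) * F (M + 1) :=
      split_top _ M
    have e2' : ∑ j ∈ Finset.Icc 1 (M + 1), a m j
        = (∑ j ∈ Finset.Icc 1 M, a m j) + a m (M + 1) :=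
      split_top _ M
    rcases Nat.le_one_iff_eq_zero_or_eq_one.mp (hb1 (M + 2)) with h | h
    · -- top digit 0: m < F (M+2) ≤ m, contradiction
      exfalso
      rw [h, Nat.zero_mul, Nat.add_zero] at e1
      have hlt : ∑ j ∈ Finset.Icc 1 (M + 1), a m j * F j < F (M + 2) :=
        sum_lt_F (a m) hb1 hb2 (M + 1)
      omega
    · have h0 : a m (M + 1) = 0 := by
        have h1 := hb1 (M + 1)
        by_contra hni
        exact hb2 (M + 1) ⟨by omega, h⟩
      rw [h, Nat.one_mul] at e1
      rw [h] at e1'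
      rw [h0, Nat.zero_mul, Nat.add_zero] at e2
      rw [h0, Nat.add_zero] at e2'
      -- m' := ∑ Icc 1 M
      have hm'lt : ∑ j ∈ Finset.Icc 1 M, a m j * F j < F (n + 1) := by omega
      obtain ⟨-, -, hkey⟩ := key (a m) hb1 hb2 n M (by omega) hm'lt
      by_contra hcon
      push_neg at hcon
      have hle : (∑ j ∈ Finset.Icc 1 M, a m j) ≤ t := by omega
      have hmon : S n (∑ j ∈ Finset.Icc 1 M, a m j) ≤ S n t := S_mono_t n hle
      rw [hT, hTt] at hm1
      omega
end
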